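/- arXiv:math/0509479 — 2 statements merged into one kernel-verified Lean document; each statement's English description precedes it below -/
import Mathlib

section
/- For H > 0 and t > 0, the half-height h_t(H) = ∫_t^{ρ_t(H)} H(ρ_t(H)² − x²)/√(x² − H²(ρ_t(H)² − x²)²) dx satisfies 0 < h_t(H) < 1/(2H). -/
open Set MeasureTheory intervalIntegral

set_option maxHeartbeats 2000000 in
theorem half_height_bounds (H t : ℝ) (hH : 0 < H) (ht : 0 < t) :
    0 < (∫ x in t..(Real.sqrt ((H * t ^ 2 + t) / H)),
        H * (Real.sqrt ((H * t ^ 2 + t) / H) ^ 2 - x ^ 2) /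
          Real.sqrt (x ^ 2 - H ^ 2 * (Real.sqrt ((H * t ^ 2 + t) / H) ^ 2 - x ^ 2) ^ 2)) ∧
    (∫ x in t..(Real.sqrt ((H * t ^ 2 + t) / H)),
        H * (Real.sqrt ((H * t ^ 2 + t) / H) ^ 2 - x ^ 2) /
          Real.sqrt (x ^ 2 - H ^ 2 * (Real.sqrt ((H * t ^ 2 + t) / H) ^ 2 - x ^ 2) ^ 2))
      < 1 / (2 * H) := by
  obtain ⟨ρ, hρdef⟩ : ∃ r : ℝ, r = Real.sqrt ((H * t ^ 2 + t) / H) := ⟨_, rfl⟩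
  rw [← hρdef]
  have harg : 0 ≤ (H * t ^ 2 + t) / H := by positivity
  have hρ2' : H * ρ ^ 2 = H * t ^ 2 + t := by
    rw [hρdef, Real.sq_sqrt harg]; field_simp
  have htρ : t < ρ := by
    rw [hρdef]
    refine (Real.lt_sqrt ht.le).mpr ?_
    rw [lt_div_iff₀ hH]; nlinarith
  have hρ0 : 0 < ρ := ht.trans htρ
  -- key algebraic identities
  have idx : ∀ x : ℝ, x - H * (ρ ^ 2 - x ^ 2) = (x - t) * (H * (x + t) + 1) := by
    intro x; linear_combination -hρ2'
  have idt : ∀ x : ℝ, t - H * (ρ ^ 2 - x ^ 2) = H * (x - t) * (x + t) := by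
    intro x; linear_combination -hρ2'
  have ht2A : ∀ x : ℝ, t ^ 2 - H ^ 2 * (ρ ^ 2 - x ^ 2) ^ 2
      = H * (x - t) * (x + t) * (t + H * (ρ ^ 2 - x ^ 2)) := by
    intro x; linear_combination (t + H * (ρ ^ 2 - x ^ 2)) * idt x
  obtain ⟨f, hfdef⟩ : ∃ F : ℝ → ℝ, F = fun x => H * (ρ ^ 2 - x ^ 2) /
      Real.sqrt (x ^ 2 - H ^ 2 * (ρ ^ 2 - x ^ 2) ^ 2) := ⟨_, rfl⟩
  rw [show (fun x => H * (ρ ^ 2 - x ^ 2) / Real.sqrt (x ^ 2 - H ^ 2 * (ρ ^ 2 - x ^ 2) ^ 2))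
    = f from hfdef.symm]
  obtain ⟨g, hgdef⟩ : ∃ F : ℝ → ℝ, F = fun x => x * (H * (ρ ^ 2 - x ^ 2)) /
      (t * Real.sqrt (t ^ 2 - H ^ 2 * (ρ ^ 2 - x ^ 2) ^ 2)) := ⟨_, rfl⟩
  obtain ⟨G, hGdef⟩ : ∃ F : ℝ → ℝ, F = fun x =>
      Real.sqrt (t ^ 2 - H ^ 2 * (ρ ^ 2 - x ^ 2) ^ 2) / (2 * H * t) := ⟨_, rfl⟩
  -- basic facts for x in Ioc t ρ
  have hA_nonneg : ∀ x ∈ Ioc t ρ, 0 ≤ H * (ρ ^ 2 - x ^ 2) := by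
    intro x hx
    have hx0 : 0 < x := ht.trans hx.1
    have : x ^ 2 ≤ ρ ^ 2 := by nlinarith [hx.2]
    nlinarith
  have hA_le_t : ∀ x ∈ Ioc t ρ, H * (ρ ^ 2 - x ^ 2) ≤ t := by
    intro x hx
    have h1 : 0 ≤ H * (x - t) * (x + t) := by
      apply mul_nonneg (mul_nonneg hH.le (by linarith [hx.1.le]))
      linarith [hx.1.le, ht]
    linarith [idt x]
  have hD2_nonneg : ∀ x ∈ Ioc t ρ, 0 ≤ t ^ 2 - H ^ 2 * (ρ ^ 2 - x ^ 2) ^ 2 := by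
    intro x hx
    nlinarith [hA_nonneg x hx, hA_le_t x hx]
  have hA_pos : ∀ x ∈ Ioo t ρ, 0 < H * (ρ ^ 2 - x ^ 2) := by
    intro x hx
    have hx0 : 0 < x := ht.trans hx.1
    have : x ^ 2 < ρ ^ 2 := by nlinarith [hx.2]
    nlinarith
  have hA_lt_x : ∀ x ∈ Ioo t ρ, H * (ρ ^ 2 - x ^ 2) < x := by
    intro x hx
    have hx0 : 0 < x := ht.trans hx.1
    have h1 : 0 < (x - t) * (H * (x + t) + 1) := by
      apply mul_pos (by linarith [hx.1])
      nlinarith [mul_pos hH (show (0:ℝ) < x + t by linarith)]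
    linarith [idx x]
  have hA_lt_t : ∀ x ∈ Ioo t ρ, H * (ρ ^ 2 - x ^ 2) < t := by
    intro x hx
    have h1 : 0 < H * (x - t) * (x + t) := by
      apply mul_pos (mul_pos hH (by linarith [hx.1]))
      linarith [hx.1, ht]
    linarith [idt x]
  have hD1_pos : ∀ x ∈ Ioo t ρ, 0 < x ^ 2 - H ^ 2 * (ρ ^ 2 - x ^ 2) ^ 2 := by
    intro x hx
    have hx0 : 0 < x := ht.trans hx.1
    nlinarith [hA_pos x hx, hA_lt_x x hx,
      mul_pos (sub_pos.mpr (hA_lt_x x hx)) (show (0:ℝ) < x + H * (ρ ^ 2 - x ^ 2) by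
        nlinarith [hA_pos x hx])]
  have hD2_pos : ∀ x ∈ Ioo t ρ, 0 < t ^ 2 - H ^ 2 * (ρ ^ 2 - x ^ 2) ^ 2 := by
    intro x hx
    nlinarith [hA_pos x hx, hA_lt_t x hx,
      mul_pos (sub_pos.mpr (hA_lt_t x hx)) (show (0:ℝ) < t + H * (ρ ^ 2 - x ^ 2) by
        nlinarith [hA_pos x hx])]
  -- f positive on Ioo
  have hf_pos : ∀ x ∈ Ioo t ρ, 0 < f x := by
    intro x hx
    simp only [hfdef]
    exact div_pos (hA_pos x hx) (Real.sqrt_pos.mpr (hD1_pos x hx))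
  -- f < g on Ioo
  have hf_lt_g : ∀ x ∈ Ioo t ρ, f x < g x := by
    intro x hx
    have hA := hA_pos x hx
    have hD1 := hD1_pos x hx
    have hD2 := hD2_pos x hx
    have hs1 : 0 < Real.sqrt (x ^ 2 - H ^ 2 * (ρ ^ 2 - x ^ 2) ^ 2) := Real.sqrt_pos.mpr hD1
    have hs2 : 0 < Real.sqrt (t ^ 2 - H ^ 2 * (ρ ^ 2 - x ^ 2) ^ 2) := Real.sqrt_pos.mpr hD2
    have hlt : Real.sqrt (t ^ 2 - H ^ 2 * (ρ ^ 2 - x ^ 2) ^ 2)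
        < Real.sqrt (x ^ 2 - H ^ 2 * (ρ ^ 2 - x ^ 2) ^ 2) := by
      apply Real.sqrt_lt_sqrt hD2.le
      nlinarith [hx.1, ht]
    have hts : t * Real.sqrt (t ^ 2 - H ^ 2 * (ρ ^ 2 - x ^ 2) ^ 2)
        < x * Real.sqrt (x ^ 2 - H ^ 2 * (ρ ^ 2 - x ^ 2) ^ 2) :=
      mul_lt_mul'' hx.1 hlt ht.le hs2.le
    simp only [hfdef, hgdef]
    rw [div_lt_div_iff₀ hs1 (by positivity)]
    nlinarith [mul_lt_mul_of_pos_left hts hA]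
  -- g nonneg on Ioc
  have hg_nonneg : ∀ x ∈ Ioc t ρ, 0 ≤ g x := by
    intro x hx
    have hx0 : 0 < x := ht.trans hx.1
    simp only [hgdef]
    apply div_nonneg (by nlinarith [hA_nonneg x hx]) (by positivity)
  -- f ≤ g on Ioc
  have hf_le_g : ∀ x ∈ Ioc t ρ, f x ≤ g x := by
    intro x hx
    rcases eq_or_lt_of_le hx.2 with h | h
    · have hAz : H * (ρ ^ 2 - x ^ 2) = 0 := by rw [h]; ring
      simp only [hfdef, hgdef, hAz, mul_zero, zero_div, zero_mul, mul_zero, le_refl]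
    · exact (hf_lt_g x ⟨hx.1, h⟩).le
  have hf_nonneg : ∀ x ∈ Ioc t ρ, 0 ≤ f x := by
    intro x hx
    simp only [hfdef]
    exact div_nonneg (hA_nonneg x hx) (Real.sqrt_nonneg _)
  -- measurability
  have hgm : Measurable g := by
    rw [hgdef]; apply Measurable.div <;> fun_prop
  have hfm : Measurable f := by
    rw [hfdef]; apply Measurable.div <;> fun_prop
  -- integrable majorant C * (x-t)^(-1/2)
  have hmaj : IntervalIntegrable (fun x => (ρ / (t * Real.sqrt (2 * H))) * (x - t) ^ (-(1/2) : ℝ))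
      volume t ρ := by
    have h0 : IntervalIntegrable (fun x : ℝ => x ^ (-(1/2) : ℝ)) volume 0 (ρ - t) :=
      intervalIntegral.intervalIntegrable_rpow' (by norm_num)
    have h1 := (h0.comp_sub_right t)
    simp only [zero_add] at h1
    rw [show ρ - t + t = ρ by ring] at h1
    exact h1.const_mul _
  have hg_bound : ∀ x ∈ Ioc t ρ, g x ≤ (ρ / (t * Real.sqrt (2 * H))) * (x - t) ^ (-(1/2) : ℝ) := by
    intro x hx
    have hxt : 0 < x - t := sub_pos.mpr hx.1
    have hA0 := hA_nonneg x hx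
    have hAt := hA_le_t x hx
    have hx0 : 0 < x := ht.trans hx.1
    have hrw : (x - t) ^ (-(1/2) : ℝ) = 1 / Real.sqrt (x - t) := by
      rw [Real.sqrt_eq_rpow, Real.rpow_neg hxt.le]
      exact (one_div _).symm
    have h2 : 2 * H * t ^ 2 * (x - t) ≤ t ^ 2 - H ^ 2 * (ρ ^ 2 - x ^ 2) ^ 2 := by
      have h2a : 0 ≤ (x + t) * (t + H * (ρ ^ 2 - x ^ 2)) - 2 * t ^ 2 := by
        have := mul_le_mul (show 2 * t ≤ x + t by linarith [hx.1.le])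
          (show t ≤ t + H * (ρ ^ 2 - x ^ 2) by linarith) ht.le (by linarith [hx.1.le, ht])
        linarith [this]
      have h2b : 0 ≤ H * (x - t) * ((x + t) * (t + H * (ρ ^ 2 - x ^ 2)) - 2 * t ^ 2) :=
        mul_nonneg (mul_nonneg hH.le hxt.le) h2a
      linarith [ht2A x, h2b]
    have h3 : Real.sqrt (2 * H * t ^ 2 * (x - t))
        = Real.sqrt (2 * H) * t * Real.sqrt (x - t) := by
      rw [show 2 * H * t ^ 2 * (x - t) = (2 * H) * (t ^ 2 * (x - t)) by ring,
        Real.sqrt_mul (by positivity) , Real.sqrt_mul (sq_nonneg t), Real.sqrt_sq ht.le]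
      ring
    have h4 : Real.sqrt (2 * H) * t * Real.sqrt (x - t)
        ≤ Real.sqrt (t ^ 2 - H ^ 2 * (ρ ^ 2 - x ^ 2) ^ 2) := by
      rw [← h3]; exact Real.sqrt_le_sqrt h2
    have hs2H : 0 < Real.sqrt (2 * H) := Real.sqrt_pos.mpr (by positivity)
    have hsxt : 0 < Real.sqrt (x - t) := Real.sqrt_pos.mpr hxt
    have h5 : x * (H * (ρ ^ 2 - x ^ 2)) ≤ ρ * t :=
      mul_le_mul hx.2 hAt hA0 hρ0.le
    have h6 : x * (H * (ρ ^ 2 - x ^ 2)) * (Real.sqrt (2 * H) * t * Real.sqrt (x - t))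
        ≤ ρ * t * Real.sqrt (t ^ 2 - H ^ 2 * (ρ ^ 2 - x ^ 2) ^ 2) :=
      mul_le_mul h5 h4 (by positivity) (by positivity)
    simp only [hgdef]
    have hspos : 0 < Real.sqrt (t ^ 2 - H ^ 2 * (ρ ^ 2 - x ^ 2) ^ 2) :=
      lt_of_lt_of_le (by positivity) h4
    rw [hrw, div_mul_div_comm, div_le_div_iff₀ (mul_pos ht hspos) (by positivity)]
    linarith [h6]
  -- integrability of g
  have hg_int : IntervalIntegrable g volume t ρ := by
    rw [intervalIntegrable_iff_integrableOn_Ioc_of_le htρ.le]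
    refine Integrable.mono ((intervalIntegrable_iff_integrableOn_Ioc_of_le htρ.le).mp hmaj)
      hgm.aestronglyMeasurable.restrict ?_
    rw [ae_restrict_iff' measurableSet_Ioc]
    filter_upwards with x hx
    rw [Real.norm_eq_abs, Real.norm_eq_abs, abs_of_nonneg (hg_nonneg x hx)]
    exact le_trans (hg_bound x hx) (le_abs_self _)
  -- integrability of f
  have hf_int : IntervalIntegrable f volume t ρ := by
    rw [intervalIntegrable_iff_integrableOn_Ioc_of_le htρ.le]
    refine Integrable.mono ((intervalIntegrable_iff_integrableOn_Ioc_of_le htρ.le).mp hg_int)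
      hfm.aestronglyMeasurable.restrict ?_
    rw [ae_restrict_iff' measurableSet_Ioc]
    filter_upwards with x hx
    rw [Real.norm_eq_abs, Real.norm_eq_abs, abs_of_nonneg (hf_nonneg x hx)]
    exact le_trans (hf_le_g x hx) (le_abs_self _)
  -- FTC for g
  have hGcont : ContinuousOn G (Icc t ρ) := by
    apply Continuous.continuousOn
    simp only [hGdef]
    fun_prop
  have hGderiv : ∀ x ∈ Ioo t ρ, HasDerivAt G (g x) x := by
    intro x hx
    have hD2 := hD2_pos x hx
    have h1 : HasDerivAt (fun y : ℝ => ρ ^ 2 - y ^ 2) (-(2 * x)) x := by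
      simpa using (hasDerivAt_pow 2 x).const_sub (ρ ^ 2)
    have h2 : HasDerivAt (fun y : ℝ => t ^ 2 - H ^ 2 * (ρ ^ 2 - y ^ 2) ^ 2)
        (4 * H ^ 2 * x * (ρ ^ 2 - x ^ 2)) x := by
      have h3 := ((h1.pow 2).const_mul (H ^ 2)).const_sub (t ^ 2)
      refine h3.congr_deriv ?_
      push_cast
      ring
    have hs := (Real.hasDerivAt_sqrt hD2.ne').comp x h2
    have h4 := hs.div_const (2 * H * t)
    have : g x = 1 / (2 * Real.sqrt (t ^ 2 - H ^ 2 * (ρ ^ 2 - x ^ 2) ^ 2))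
        * (4 * H ^ 2 * x * (ρ ^ 2 - x ^ 2)) / (2 * H * t) := by
      simp only [hgdef]
      have hs2 : 0 < Real.sqrt (t ^ 2 - H ^ 2 * (ρ ^ 2 - x ^ 2) ^ 2) := Real.sqrt_pos.mpr hD2
      rw [one_div_mul_eq_div, div_div, div_eq_div_iff (mul_pos ht hs2).ne'
        (ne_of_gt (mul_pos (mul_pos two_pos hs2) (by positivity)))]
      ring
    rw [this, hGdef]
    exact h4
  have hIg : (∫ x in t..ρ, g x) = 1 / (2 * H) := by
    rw [integral_eq_sub_of_hasDeriv_right_of_le htρ.le hGcont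
      (fun x hx => (hGderiv x hx).hasDerivWithinAt) hg_int]
    have e1 : G ρ = 1 / (2 * H) := by
      simp only [hGdef]
      rw [show t ^ 2 - H ^ 2 * (ρ ^ 2 - ρ ^ 2) ^ 2 = t ^ 2 by ring, Real.sqrt_sq ht.le]
      field_simp
    have e2 : G t = 0 := by
      simp only [hGdef]
      rw [show t ^ 2 - H ^ 2 * (ρ ^ 2 - t ^ 2) ^ 2 = 0 from by
        linear_combination (-(t + H * (ρ ^ 2 - t ^ 2))) * hρ2', Real.sqrt_zero, zero_div]
    rw [e1, e2, sub_zero]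
  -- conclusion
  have hpos : 0 < ∫ x in t..ρ, f x :=
    intervalIntegral_pos_of_pos_on hf_int hf_pos htρ
  have hsub : 0 < ∫ x in t..ρ, (g x - f x) :=
    intervalIntegral_pos_of_pos_on (hg_int.sub hf_int)
      (fun x hx => sub_pos.mpr (hf_lt_g x hx)) htρ
  rw [intervalIntegral.integral_sub hg_int hf_int, hIg] at hsub
  exact ⟨hpos, by linarith⟩
end

section
/- Let H > 0 and suppose u, v are two solutions of div(∇u/√(1+|∇u|²)) = 2H on Ω = ℝ × (−l, l), continuous on the closure, with the same boundary values, and such that v − u is bounded on Ω. Then u = v. -/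
/-- Partial derivative in the first coordinate direction. -/
noncomputable def pdx (f : ℝ × ℝ → ℝ) (p : ℝ × ℝ) : ℝ := fderiv ℝ f p (1, 0)

/-- Partial derivative in the second coordinate direction. -/
noncomputable def pdy (f : ℝ × ℝ → ℝ) (p : ℝ × ℝ) : ℝ := fderiv ℝ f p (0, 1)

/-- The CMC divergence operator `div(∇u/√(1+|∇u|²))` at a point. -/
noncomputable def cmcOp (u : ℝ × ℝ → ℝ) (p : ℝ × ℝ) : ℝ :=
  pdx (fun q => pdx u q / Real.sqrt (1 + (pdx u q) ^ 2 + (pdy u q) ^ 2)) p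
  + pdy (fun q => pdy u q / Real.sqrt (1 + (pdx u q) ^ 2 + (pdy u q) ^ 2)) p

open MeasureTheory Set

noncomputable def Wf (u : ℝ × ℝ → ℝ) (q : ℝ × ℝ) : ℝ :=
  Real.sqrt (1 + (pdx u q) ^ 2 + (pdy u q) ^ 2)

noncomputable def N1 (u : ℝ × ℝ → ℝ) (q : ℝ × ℝ) : ℝ := pdx u q / Wf u q
noncomputable def N2 (u : ℝ × ℝ → ℝ) (q : ℝ × ℝ) : ℝ := pdy u q / Wf u q

lemma cmcOp_eq (u : ℝ × ℝ → ℝ) (p : ℝ × ℝ) : cmcOp u p = pdx (N1 u) p + pdy (N2 u) p := rfl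

lemma one_le_Wf (u : ℝ × ℝ → ℝ) (q : ℝ × ℝ) : 1 ≤ Wf u q := by
  have h : (1:ℝ) ≤ 1 + (pdx u q) ^ 2 + (pdy u q) ^ 2 := by nlinarith [sq_nonneg (pdx u q), sq_nonneg (pdy u q)]
  have := Real.sqrt_le_sqrt h
  simpa [Wf] using this

lemma Wf_pos (u : ℝ × ℝ → ℝ) (q : ℝ × ℝ) : 0 < Wf u q :=
  lt_of_lt_of_le one_pos (one_le_Wf u q)

lemma Wf_sq (u : ℝ × ℝ → ℝ) (q : ℝ × ℝ) :
    (Wf u q) ^ 2 = 1 + (pdx u q) ^ 2 + (pdy u q) ^ 2 :=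
  Real.sq_sqrt (by positivity)

lemma abs_N1_le_one (u : ℝ × ℝ → ℝ) (q : ℝ × ℝ) : |N1 u q| ≤ 1 := by
  rw [N1, abs_div, abs_of_pos (Wf_pos u q), div_le_one (Wf_pos u q)]
  nlinarith [Wf_sq u q, Wf_pos u q, sq_abs (pdx u q), abs_nonneg (pdx u q), sq_nonneg (pdy u q)]

lemma abs_N2_le_one (u : ℝ × ℝ → ℝ) (q : ℝ × ℝ) : |N2 u q| ≤ 1 := by
  rw [N2, abs_div, abs_of_pos (Wf_pos u q), div_le_one (Wf_pos u q)]
  nlinarith [Wf_sq u q, Wf_pos u q, sq_abs (pdy u q), abs_nonneg (pdy u q), sq_nonneg (pdx u q)]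

section Reg

variable {s : Set (ℝ × ℝ)} {u : ℝ × ℝ → ℝ}

lemma pdx_contDiffOn (hs : IsOpen s) (hu : ContDiffOn ℝ 2 u s) :
    ContDiffOn ℝ 1 (pdx u) s :=
  (hu.fderiv_of_isOpen hs (by norm_num)).clm_apply contDiffOn_const

lemma pdy_contDiffOn (hs : IsOpen s) (hu : ContDiffOn ℝ 2 u s) :
    ContDiffOn ℝ 1 (pdy u) s :=
  (hu.fderiv_of_isOpen hs (by norm_num)).clm_apply contDiffOn_const

lemma Wf_contDiffOn (hs : IsOpen s) (hu : ContDiffOn ℝ 2 u s) :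
    ContDiffOn ℝ 1 (Wf u) s := by
  have h : ContDiffOn ℝ 1 (fun q => 1 + (pdx u q) ^ 2 + (pdy u q) ^ 2) s :=
    (contDiffOn_const.add ((pdx_contDiffOn hs hu).pow 2)).add ((pdy_contDiffOn hs hu).pow 2)
  exact h.sqrt (fun q _ => by positivity)

lemma N1_contDiffOn (hs : IsOpen s) (hu : ContDiffOn ℝ 2 u s) :
    ContDiffOn ℝ 1 (N1 u) s :=
  (pdx_contDiffOn hs hu).div (Wf_contDiffOn hs hu) (fun q _ => (Wf_pos u q).ne')

lemma N2_contDiffOn (hs : IsOpen s) (hu : ContDiffOn ℝ 2 u s) :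
    ContDiffOn ℝ 1 (N2 u) s :=
  (pdy_contDiffOn hs hu).div (Wf_contDiffOn hs hu) (fun q _ => (Wf_pos u q).ne')

end Reg

noncomputable def Xone (u v : ℝ × ℝ → ℝ) (q : ℝ × ℝ) : ℝ := N1 v q - N1 u q
noncomputable def Xtwo (u v : ℝ × ℝ → ℝ) (q : ℝ × ℝ) : ℝ := N2 v q - N2 u q
noncomputable def dd (u v : ℝ × ℝ → ℝ) (q : ℝ × ℝ) : ℝ :=
  (pdx v q - pdx u q) * Xone u v q + (pdy v q - pdy u q) * Xtwo u v q

lemma key_t_nonneg (p1 p2 q1 q2 a b : ℝ) (ha : 1 ≤ a) (hb : 1 ≤ b)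
    (ha2 : a^2 = 1 + p1^2 + p2^2) (hb2 : b^2 = 1 + q1^2 + q2^2) :
    0 ≤ a*b - 1 - (p1*q1 + p2*q2) := by
  nlinarith [sq_nonneg (p1-q1), sq_nonneg (p2-q2), sq_nonneg (p1*q2-p2*q1),
    mul_pos (lt_of_lt_of_le one_pos ha) (lt_of_lt_of_le one_pos hb),
    sq_nonneg (a*b - 1 - (p1*q1+p2*q2)), sq_nonneg (a*b + 1 + p1*q1 + p2*q2)]

lemma key_ineq (p1 p2 q1 q2 a b : ℝ) (ha : 1 ≤ a) (hb : 1 ≤ b)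
    (ha2 : a^2 = 1 + p1^2 + p2^2) (hb2 : b^2 = 1 + q1^2 + q2^2) :
    (p1*b - q1*a)^2 + (p2*b - q2*a)^2 ≤
      a*b*((p1-q1)*(p1*b-q1*a) + (p2-q2)*(p2*b-q2*a)) := by
  have ht := key_t_nonneg p1 p2 q1 q2 a b ha hb ha2 hb2
  have hid : a*b*((p1-q1)*(p1*b-q1*a) + (p2-q2)*(p2*b-q2*a))
      - ((p1*b-q1*a)^2 + (p2*b-q2*a)^2)
      = a*b*(a*b-1-(p1*q1+p2*q2))*(a+b-2) + (a-b)^2 := by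
    linear_combination (-(b^2*(a-1)))*ha2 + (-(a^2*(b-1)))*hb2
  nlinarith [mul_nonneg (mul_nonneg (mul_nonneg (le_trans zero_le_one ha)
      (le_trans zero_le_one hb)) ht) (by linarith : (0:ℝ) ≤ a + b - 2), sq_nonneg (a-b)]

lemma nvec_inj (p1 p2 q1 q2 a b : ℝ) (ha : 1 ≤ a) (hb : 1 ≤ b)
    (ha2 : a^2 = 1 + p1^2 + p2^2) (hb2 : b^2 = 1 + q1^2 + q2^2)
    (h1 : p1*b = q1*a) (h2 : p2*b = q2*a) : p1 = q1 ∧ p2 = q2 := by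
  have ha0 : 0 < a := lt_of_lt_of_le one_pos ha
  have hb0 : 0 < b := lt_of_lt_of_le one_pos hb
  have h3 : b^2*(p1^2+p2^2) = a^2*(q1^2+q2^2) := by
    linear_combination (p1*b+q1*a)*h1 + (p2*b+q2*a)*h2
  have hab : a = b := by
    have h4 : a^2 = b^2 := by nlinarith
    nlinarith
  subst hab
  constructor
  · have := mul_right_cancel₀ (ne_of_gt ha0) h1; linarith
  · have := mul_right_cancel₀ (ne_of_gt ha0) h2; linarith

/-- pointwise: |X|² ≤ ⟨∇(v-u), X⟩, with no hypotheses. -/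
lemma sq_le_dd (u v : ℝ × ℝ → ℝ) (q : ℝ × ℝ) :
    (Xone u v q) ^ 2 + (Xtwo u v q) ^ 2 ≤ dd u v q := by
  set p1 := pdx v q; set p2 := pdy v q; set q1 := pdx u q; set q2 := pdy u q
  set a := Wf v q; set b := Wf u q
  have ha := one_le_Wf v q; have hb := one_le_Wf u q
  have ha0 : (0:ℝ) < a := Wf_pos v q; have hb0 : (0:ℝ) < b := Wf_pos u q
  have key := key_ineq p1 p2 q1 q2 a b ha hb (Wf_sq v q) (Wf_sq u q)
  have hX1 : Xone u v q = (p1*b - q1*a)/(a*b) := by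
    rw [Xone, N1, N1]; field_simp; ring
  have hX2 : Xtwo u v q = (p2*b - q2*a)/(a*b) := by
    rw [Xtwo, N2, N2]; field_simp; ring
  have hdd : dd u v q = ((p1-q1)*(p1*b-q1*a) + (p2-q2)*(p2*b-q2*a))/(a*b) := by
    rw [dd, hX1, hX2]; field_simp; ring
  rw [hX1, hX2, hdd, div_pow, div_pow, ← add_div, div_le_div_iff₀ (by positivity) (by positivity)]
  calc ((p1*b-q1*a)^2 + (p2*b-q2*a)^2) * (a*b)
      ≤ (a*b*((p1-q1)*(p1*b-q1*a) + (p2-q2)*(p2*b-q2*a))) * (a*b) := by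
        exact mul_le_mul_of_nonneg_right key (by positivity)
    _ = ((p1-q1)*(p1*b-q1*a) + (p2-q2)*(p2*b-q2*a)) * (a*b)^2 := by ring

lemma dd_nonneg (u v : ℝ × ℝ → ℝ) (q : ℝ × ℝ) : 0 ≤ dd u v q :=
  le_trans (by positivity) (sq_le_dd u v q)

lemma abs_Xone_le_two (u v : ℝ × ℝ → ℝ) (q : ℝ × ℝ) : |Xone u v q| ≤ 2 := by
  rw [Xone]
  calc |N1 v q - N1 u q| ≤ |N1 v q| + |N1 u q| := abs_sub _ _
    _ ≤ 2 := by linarith [abs_N1_le_one v q, abs_N1_le_one u q]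

lemma abs_Xtwo_le_two (u v : ℝ × ℝ → ℝ) (q : ℝ × ℝ) : |Xtwo u v q| ≤ 2 := by
  rw [Xtwo]
  calc |N2 v q - N2 u q| ≤ |N2 v q| + |N2 u q| := abs_sub _ _
    _ ≤ 2 := by linarith [abs_N2_le_one v q, abs_N2_le_one u q]


lemma diffAt_of_contDiffOn {s : Set (ℝ × ℝ)} {f : ℝ × ℝ → ℝ} {p : ℝ × ℝ} (hs : IsOpen s)
    (h : ContDiffOn ℝ 1 f s) (hp : p ∈ s) : DifferentiableAt ℝ f p :=
  (h.contDiffAt (hs.mem_nhds hp)).differentiableAt one_ne_zero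

lemma pdx_mul {f g : ℝ × ℝ → ℝ} {p : ℝ × ℝ} (hf : DifferentiableAt ℝ f p)
    (hg : DifferentiableAt ℝ g p) :
    pdx (fun q => f q * g q) p = f p * pdx g p + g p * pdx f p := by
  simp [pdx, fderiv_fun_mul hf hg]

lemma pdy_mul {f g : ℝ × ℝ → ℝ} {p : ℝ × ℝ} (hf : DifferentiableAt ℝ f p)
    (hg : DifferentiableAt ℝ g p) :
    pdy (fun q => f q * g q) p = f p * pdy g p + g p * pdy f p := by
  simp [pdy, fderiv_fun_mul hf hg]

lemma pdx_sub {f g : ℝ × ℝ → ℝ} {p : ℝ × ℝ} (hf : DifferentiableAt ℝ f p)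
    (hg : DifferentiableAt ℝ g p) :
    pdx (fun q => f q - g q) p = pdx f p - pdx g p := by
  simp [pdx, fderiv_fun_sub hf hg]

lemma pdy_sub {f g : ℝ × ℝ → ℝ} {p : ℝ × ℝ} (hf : DifferentiableAt ℝ f p)
    (hg : DifferentiableAt ℝ g p) :
    pdy (fun q => f q - g q) p = pdy f p - pdy g p := by
  simp [pdy, fderiv_fun_sub hf hg]

lemma div_identity {l : ℝ} {u v : ℝ × ℝ → ℝ}
    (hu : ContDiffOn ℝ 2 u ((Set.univ : Set ℝ) ×ˢ Set.Ioo (-l) l))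
    (hv : ContDiffOn ℝ 2 v ((Set.univ : Set ℝ) ×ˢ Set.Ioo (-l) l))
    (hcmc : ∀ p ∈ (Set.univ : Set ℝ) ×ˢ Set.Ioo (-l) l, cmcOp u p = cmcOp v p)
    {p : ℝ × ℝ} (hp : p ∈ (Set.univ : Set ℝ) ×ˢ Set.Ioo (-l) l) :
    pdx (fun q => (v q - u q) * Xone u v q) p
      + pdy (fun q => (v q - u q) * Xtwo u v q) p = dd u v p := by
  have hSo : IsOpen ((Set.univ : Set ℝ) ×ˢ Set.Ioo (-l) l) := isOpen_univ.prod isOpen_Ioo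
  have hN1u := diffAt_of_contDiffOn hSo (N1_contDiffOn hSo hu) hp
  have hN1v := diffAt_of_contDiffOn hSo (N1_contDiffOn hSo hv) hp
  have hN2u := diffAt_of_contDiffOn hSo (N2_contDiffOn hSo hu) hp
  have hN2v := diffAt_of_contDiffOn hSo (N2_contDiffOn hSo hv) hp
  have hu' : DifferentiableAt ℝ u p :=
    (hu.contDiffAt (hSo.mem_nhds hp)).differentiableAt (by norm_num)
  have hv' : DifferentiableAt ℝ v p :=
    (hv.contDiffAt (hSo.mem_nhds hp)).differentiableAt (by norm_num)
  have hw : DifferentiableAt ℝ (fun q => v q - u q) p := hv'.sub hu'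
  have hX1 : DifferentiableAt ℝ (Xone u v) p := hN1v.sub hN1u
  have hX2 : DifferentiableAt ℝ (Xtwo u v) p := hN2v.sub hN2u
  rw [pdx_mul hw hX1, pdy_mul hw hX2]
  have e1 : pdx (fun q => v q - u q) p = pdx v p - pdx u p := pdx_sub hv' hu'
  have e2 : pdx (Xone u v) p = pdx (N1 v) p - pdx (N1 u) p := pdx_sub hN1v hN1u
  have e3 : pdy (fun q => v q - u q) p = pdy v p - pdy u p := pdy_sub hv' hu'
  have e4 : pdy (Xtwo u v) p = pdy (N2 v) p - pdy (N2 u) p := pdy_sub hN2v hN2u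
  have hc : pdx (N1 v) p - pdx (N1 u) p + (pdy (N2 v) p - pdy (N2 u) p) = 0 := by
    have h1 := hcmc p hp
    rw [cmcOp_eq, cmcOp_eq] at h1; linarith
  rw [e1, e2, e3, e4, dd]
  linear_combination (v p - u p) * hc


lemma dd_continuousOn {l : ℝ} {u v : ℝ × ℝ → ℝ}
    (hu : ContDiffOn ℝ 2 u ((Set.univ : Set ℝ) ×ˢ Set.Ioo (-l) l))
    (hv : ContDiffOn ℝ 2 v ((Set.univ : Set ℝ) ×ˢ Set.Ioo (-l) l)) :
    ContinuousOn (dd u v) ((Set.univ : Set ℝ) ×ˢ Set.Ioo (-l) l) := by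
  have hSo : IsOpen ((Set.univ : Set ℝ) ×ˢ Set.Ioo (-l) l) := isOpen_univ.prod isOpen_Ioo
  have h1 := (pdx_contDiffOn hSo hu).continuousOn
  have h2 := (pdx_contDiffOn hSo hv).continuousOn
  have h3 := (pdy_contDiffOn hSo hu).continuousOn
  have h4 := (pdy_contDiffOn hSo hv).continuousOn
  have hX1 : ContinuousOn (Xone u v) ((Set.univ : Set ℝ) ×ˢ Set.Ioo (-l) l) :=
    (N1_contDiffOn hSo hv).continuousOn.sub (N1_contDiffOn hSo hu).continuousOn
  have hX2 : ContinuousOn (Xtwo u v) ((Set.univ : Set ℝ) ×ˢ Set.Ioo (-l) l) :=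
    (N2_contDiffOn hSo hv).continuousOn.sub (N2_contDiffOn hSo hu).continuousOn
  exact ((h2.sub h1).mul hX1).add ((h4.sub h3).mul hX2)

lemma Xone_continuousOn {l : ℝ} {u v : ℝ × ℝ → ℝ}
    (hu : ContDiffOn ℝ 2 u ((Set.univ : Set ℝ) ×ˢ Set.Ioo (-l) l))
    (hv : ContDiffOn ℝ 2 v ((Set.univ : Set ℝ) ×ˢ Set.Ioo (-l) l)) :
    ContinuousOn (Xone u v) ((Set.univ : Set ℝ) ×ˢ Set.Ioo (-l) l) := by
  have hSo : IsOpen ((Set.univ : Set ℝ) ×ˢ Set.Ioo (-l) l) := isOpen_univ.prod isOpen_Ioo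
  exact (N1_contDiffOn hSo hv).continuousOn.sub (N1_contDiffOn hSo hu).continuousOn

lemma Xtwo_continuousOn {l : ℝ} {u v : ℝ × ℝ → ℝ}
    (hu : ContDiffOn ℝ 2 u ((Set.univ : Set ℝ) ×ˢ Set.Ioo (-l) l))
    (hv : ContDiffOn ℝ 2 v ((Set.univ : Set ℝ) ×ˢ Set.Ioo (-l) l)) :
    ContinuousOn (Xtwo u v) ((Set.univ : Set ℝ) ×ˢ Set.Ioo (-l) l) := by
  have hSo : IsOpen ((Set.univ : Set ℝ) ×ˢ Set.Ioo (-l) l) := isOpen_univ.prod isOpen_Ioo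
  exact (N2_contDiffOn hSo hv).continuousOn.sub (N2_contDiffOn hSo hu).continuousOn

lemma rect_subset {l a b : ℝ} (hb0 : 0 < b) (hbl : b < l) :
    Set.Icc ((-a, -b) : ℝ × ℝ) ((a, b) : ℝ × ℝ) ⊆ (Set.univ : Set ℝ) ×ˢ Set.Ioo (-l) l := by
  rw [Set.Icc_prod_eq]
  exact Set.prod_mono (Set.subset_univ _)
    (fun y hy => ⟨lt_of_lt_of_le (neg_lt_neg hbl) hy.1, lt_of_le_of_lt hy.2 hbl⟩)

lemma green_identity {l : ℝ} {u v : ℝ × ℝ → ℝ}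
    (hu : ContDiffOn ℝ 2 u ((Set.univ : Set ℝ) ×ˢ Set.Ioo (-l) l))
    (hv : ContDiffOn ℝ 2 v ((Set.univ : Set ℝ) ×ˢ Set.Ioo (-l) l))
    (hcmc : ∀ p ∈ (Set.univ : Set ℝ) ×ˢ Set.Ioo (-l) l, cmcOp u p = cmcOp v p)
    {a b : ℝ} (ha : 0 < a) (hb0 : 0 < b) (hbl : b < l) :
    ∫ p in Set.Icc ((-a, -b) : ℝ × ℝ) ((a, b) : ℝ × ℝ), dd u v p =
      (((∫ x in (-a)..a, (v (x, b) - u (x, b)) * Xtwo u v (x, b))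
        - ∫ x in (-a)..a, (v (x, -b) - u (x, -b)) * Xtwo u v (x, -b))
        + ∫ y in (-b)..b, (v (a, y) - u (a, y)) * Xone u v (a, y))
        - ∫ y in (-b)..b, (v (-a, y) - u (-a, y)) * Xone u v (-a, y) := by
  set S := (Set.univ : Set ℝ) ×ˢ Set.Ioo (-l) l with hS
  have hSo : IsOpen S := isOpen_univ.prod isOpen_Ioo
  have hsub : Set.Icc ((-a, -b) : ℝ × ℝ) ((a, b) : ℝ × ℝ) ⊆ S := rect_subset hb0 hbl
  set f : ℝ × ℝ → ℝ := fun q => (v q - u q) * Xone u v q with hf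
  set g : ℝ × ℝ → ℝ := fun q => (v q - u q) * Xtwo u v q with hg
  have hwc : ContinuousOn (fun q => v q - u q) S := hv.continuousOn.sub hu.continuousOn
  have hfc : ContinuousOn f S := hwc.mul (Xone_continuousOn hu hv)
  have hgc : ContinuousOn g S := hwc.mul (Xtwo_continuousOn hu hv)
  have hfd : ∀ p ∈ S, DifferentiableAt ℝ f p := by
    intro p hp
    have hu' : DifferentiableAt ℝ u p :=
      (hu.contDiffAt (hSo.mem_nhds hp)).differentiableAt (by norm_num)
    have hv' : DifferentiableAt ℝ v p :=
      (hv.contDiffAt (hSo.mem_nhds hp)).differentiableAt (by norm_num)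
    exact (hv'.sub hu').mul
      ((diffAt_of_contDiffOn hSo (N1_contDiffOn hSo hv) hp).sub
        (diffAt_of_contDiffOn hSo (N1_contDiffOn hSo hu) hp))
  have hgd : ∀ p ∈ S, DifferentiableAt ℝ g p := by
    intro p hp
    have hu' : DifferentiableAt ℝ u p :=
      (hu.contDiffAt (hSo.mem_nhds hp)).differentiableAt (by norm_num)
    have hv' : DifferentiableAt ℝ v p :=
      (hv.contDiffAt (hSo.mem_nhds hp)).differentiableAt (by norm_num)
    exact (hv'.sub hu').mul
      ((diffAt_of_contDiffOn hSo (N2_contDiffOn hSo hv) hp).sub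
        (diffAt_of_contDiffOn hSo (N2_contDiffOn hSo hu) hp))
  have hle : ((-a, -b) : ℝ × ℝ) ≤ ((a, b) : ℝ × ℝ) :=
    ⟨by dsimp; linarith, by dsimp; linarith⟩
  have heq : Set.EqOn (fun p => fderiv ℝ f p (1, 0) + fderiv ℝ g p (0, 1)) (dd u v)
      (Set.Icc ((-a, -b) : ℝ × ℝ) ((a, b) : ℝ × ℝ)) := by
    intro p hp
    exact div_identity hu hv hcmc (hsub hp)
  have hddint : MeasureTheory.IntegrableOn (dd u v)
      (Set.Icc ((-a, -b) : ℝ × ℝ) ((a, b) : ℝ × ℝ)) :=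
    ((dd_continuousOn hu hv).mono hsub).integrableOn_compact isCompact_Icc
  have Hi : MeasureTheory.IntegrableOn
      (fun p => fderiv ℝ f p (1, 0) + fderiv ℝ g p (0, 1))
      (Set.Icc ((-a, -b) : ℝ × ℝ) ((a, b) : ℝ × ℝ)) :=
    hddint.congr_fun (fun p hp => (heq hp).symm) measurableSet_Icc
  have key := MeasureTheory.integral_divergence_prod_Icc_of_hasFDerivAt_off_countable_of_le
    f g (fun p => fderiv ℝ f p) (fun p => fderiv ℝ g p) (-a, -b) (a, b) hle ∅
    Set.countable_empty (hfc.mono hsub) (hgc.mono hsub)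
    (fun p hp => (hfd p ⟨Set.mem_univ _,
      lt_of_lt_of_le (neg_lt_neg hbl) (le_of_lt hp.1.2.1),
      lt_trans hp.1.2.2 hbl⟩).hasFDerivAt)
    (fun p hp => (hgd p ⟨Set.mem_univ _,
      lt_of_lt_of_le (neg_lt_neg hbl) (le_of_lt hp.1.2.1),
      lt_trans hp.1.2.2 hbl⟩).hasFDerivAt)
    Hi
  rw [MeasureTheory.setIntegral_congr_fun measurableSet_Icc heq] at key
  exact key


lemma sq_setIntegral_le_mul_integral_sq {f : ℝ → ℝ} {c d : ℝ} (hcd : c ≤ d)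
    (hfm : AEStronglyMeasurable f (volume.restrict (Set.Icc c d)))
    (hf2 : IntegrableOn (fun y => f y ^ 2) (Set.Icc c d)) :
    (∫ y in Set.Icc c d, |f y|) ^ 2 ≤ (d - c) * ∫ y in Set.Icc c d, f y ^ 2 := by
  set μ := volume.restrict (Set.Icc c d) with hμ
  haveI : IsFiniteMeasure μ := by
    constructor
    rw [hμ, Measure.restrict_apply_univ]
    simp [Real.volume_Icc]
  have hmem : MemLp f 2 μ := (memLp_two_iff_integrable_sq hfm).2 hf2
  have habs : MemLp (fun y => |f y|) 2 μ := by
    simpa [Real.norm_eq_abs] using hmem.norm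
  have hone : MemLp (fun _ : ℝ => (1 : ℝ)) 2 μ := memLp_const 1
  have hpq : Real.HolderConjugate 2 2 := Real.HolderConjugate.two_two
  have h := integral_mul_le_Lp_mul_Lq_of_nonneg (μ := μ) hpq
    (Filter.Eventually.of_forall (fun y => abs_nonneg (f y)))
    (Filter.Eventually.of_forall (fun _ => zero_le_one))
    (by simpa using habs) (by simpa using hone)
  simp only [mul_one] at h
  have h2 : ∀ y : ℝ, |f y| ^ (2:ℝ) = f y ^ 2 := fun y => by
    rw [show (2:ℝ) = ((2:ℕ):ℝ) by norm_num, Real.rpow_natCast, sq_abs]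
  have h3 : ((1:ℝ) ^ (2:ℝ)) = 1 := by norm_num
  simp only [h2, h3] at h
  have hμu : ∫ _ : ℝ, (1:ℝ) ∂μ = d - c := by
    rw [integral_const, smul_eq_mul, mul_one, Measure.real_def, hμ, Measure.restrict_apply_univ,
      Real.volume_Icc, ENNReal.toReal_ofReal (by linarith)]
  rw [hμu] at h
  have hA : (0:ℝ) ≤ ∫ y, f y ^ 2 ∂μ := integral_nonneg (fun y => sq_nonneg _)
  have hB : (0:ℝ) ≤ d - c := by linarith
  have hA2 : ((∫ y, f y ^ 2 ∂μ) ^ ((1:ℝ)/2)) ^ 2 = ∫ y, f y ^ 2 ∂μ := by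
    rw [← Real.rpow_natCast ((∫ y, f y ^ 2 ∂μ) ^ ((1:ℝ)/2)) 2, ← Real.rpow_mul hA]
    norm_num
  have hB2 : ((d - c) ^ ((1:ℝ)/2)) ^ 2 = d - c := by
    rw [← Real.rpow_natCast ((d - c) ^ ((1:ℝ)/2)) 2, ← Real.rpow_mul hB]
    norm_num
  have hnn : (0:ℝ) ≤ ∫ y, |f y| ∂μ := integral_nonneg (fun y => abs_nonneg _)
  calc (∫ y in Set.Icc c d, |f y|) ^ 2
      ≤ ((∫ y, f y ^ 2 ∂μ) ^ ((1:ℝ)/2) * (d - c) ^ ((1:ℝ)/2)) ^ 2 := by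
        apply pow_le_pow_left₀ hnn h
    _ = (d - c) * ∫ y in Set.Icc c d, f y ^ 2 := by
        rw [mul_pow, hA2, hB2]; ring


lemma closure_strip {l : ℝ} (hl : 0 < l) :
    closure ((univ : Set ℝ) ×ˢ Ioo (-l) l) = (univ : Set ℝ) ×ˢ Icc (-l) l := by
  rw [closure_prod_eq, closure_univ, closure_Ioo (by linarith : (-l) ≠ l)]

lemma frontier_strip {l : ℝ} (hl : 0 < l) :
    frontier ((univ : Set ℝ) ×ˢ Ioo (-l) l) = (univ : Set ℝ) ×ˢ ({-l, l} : Set ℝ) := by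
  rw [frontier_prod_eq, frontier_univ, closure_univ, frontier_Ioo (by linarith : -l < l)]
  simp

/-- choose `b` close to `l` making the horizontal boundary integral small -/
lemma horiz_small {l M A ε b₀ : ℝ} (hl : 0 < l) {w : ℝ × ℝ → ℝ}
    (hwcont : ContinuousOn w (closure ((univ : Set ℝ) ×ˢ Ioo (-l) l)))
    (hwfr : ∀ p ∈ frontier ((univ : Set ℝ) ×ˢ Ioo (-l) l), w p = 0)
    (hwM : ∀ p ∈ (univ : Set ℝ) ×ˢ Ioo (-l) l, |w p| ≤ M)
    (hε : 0 < ε) (hb₀ : 0 < b₀) (hb₀l : b₀ < l) :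
    ∃ b : ℝ, b₀ < b ∧ b < l ∧
      (∫ x in Icc (-A) A, (|w (x, b)| + |w (x, -b)|)) < ε := by
  set S := (univ : Set ℝ) ×ˢ Ioo (-l) l with hS
  set bs : ℕ → ℝ := fun n => l - (l - b₀) / (n + 2) with hbs
  have hmem : ∀ n : ℕ, b₀ < bs n ∧ bs n < l := by
    intro n
    have h2 : (0:ℝ) < (n:ℝ) + 2 := by positivity
    have h3 : 0 < (l - b₀) / ((n:ℝ) + 2) := div_pos (by linarith) h2
    constructor
    · have h4 : (l - b₀) / ((n:ℝ) + 2) < (l - b₀) / 1 :=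
        div_lt_div_of_pos_left (by linarith) one_pos (by linarith)
      rw [div_one] at h4
      simp only [hbs]
      linarith
    · simp only [hbs]; linarith
  have hbs_tendsto : Filter.Tendsto bs Filter.atTop (nhds l) := by
    have h1 : Filter.Tendsto (fun n : ℕ => ((n:ℝ) + 2)) Filter.atTop Filter.atTop :=
      Filter.tendsto_atTop_add_const_right _ 2 tendsto_natCast_atTop_atTop
    have h2 : Filter.Tendsto (fun n : ℕ => (l - b₀) / ((n:ℝ) + 2)) Filter.atTop (nhds 0) :=
      Filter.Tendsto.div_atTop tendsto_const_nhds h1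
    have h3 := Filter.Tendsto.sub (tendsto_const_nhds : Filter.Tendsto (fun _ : ℕ => l) Filter.atTop (nhds l)) h2
    simpa using h3
  have hmemS : ∀ n (x : ℝ), ((x, bs n) : ℝ × ℝ) ∈ S ∧ ((x, -bs n) : ℝ × ℝ) ∈ S := by
    intro n x
    obtain ⟨h1, h2⟩ := hmem n
    refine ⟨⟨mem_univ _, ?_, ?_⟩, ⟨mem_univ _, ?_, ?_⟩⟩ <;> simp <;> linarith
  have hMnn : 0 ≤ M := le_trans (abs_nonneg _) (hwM (0, bs 0) (hmemS 0 0).1)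
  have hslice : ∀ y ∈ Icc (-l) l, Continuous (fun x : ℝ => w (x, y)) := by
    intro y hy
    apply hwcont.comp_continuous (continuous_id.prodMk continuous_const)
    intro x
    rw [closure_strip hl]
    exact ⟨mem_univ _, hy⟩
  have hbsIcc : ∀ n : ℕ, bs n ∈ Icc (-l) l := by
    intro n
    obtain ⟨h1, h2⟩ := hmem n
    exact ⟨by linarith, le_of_lt h2⟩
  have hnegIcc : ∀ n : ℕ, (-bs n) ∈ Icc (-l) l := by
    intro n
    obtain ⟨h1, h2⟩ := hmem n
    exact ⟨by linarith, by linarith⟩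
  have hdct : Filter.Tendsto (fun n => ∫ x in Icc (-A) A, (|w (x, bs n)| + |w (x, -bs n)|))
      Filter.atTop (nhds (∫ _ in Icc (-A) A, (0:ℝ))) := by
    apply tendsto_integral_of_dominated_convergence (fun _ => 2 * M)
    · intro n
      exact (((hslice _ (hbsIcc n)).abs.add ((hslice _ (hnegIcc n)).abs)).aestronglyMeasurable)
    · exact integrable_const _
    · intro n
      apply Filter.Eventually.of_forall
      intro x
      have h1 := hwM _ (hmemS n x).1
      have h2 := hwM _ (hmemS n x).2
      rw [Real.norm_eq_abs, abs_of_nonneg (by positivity)]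
      linarith
    · apply Filter.Eventually.of_forall
      intro x
      have hmemtop : ((x, l) : ℝ × ℝ) ∈ closure S := by
        rw [closure_strip hl]
        exact ⟨mem_univ _, by constructor <;> simp <;> linarith⟩
      have hmembot : ((x, -l) : ℝ × ℝ) ∈ closure S := by
        rw [closure_strip hl]
        exact ⟨mem_univ _, by constructor <;> simp <;> linarith⟩
      have htop : Filter.Tendsto (fun n => w (x, bs n)) Filter.atTop (nhds (w (x, l))) := by
        apply (hwcont _ hmemtop).tendsto.comp
        apply tendsto_nhdsWithin_of_tendsto_nhds_of_eventually_within
        · exact (Continuous.tendsto (continuous_const.prodMk continuous_id) l).comp hbs_tendsto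
        · exact Filter.Eventually.of_forall (fun n => subset_closure (hmemS n x).1)
      have hbot : Filter.Tendsto (fun n => w (x, -bs n)) Filter.atTop (nhds (w (x, -l))) := by
        apply (hwcont _ hmembot).tendsto.comp
        apply tendsto_nhdsWithin_of_tendsto_nhds_of_eventually_within
        · exact (Continuous.tendsto (continuous_const.prodMk continuous_id) (-l)).comp
            hbs_tendsto.neg
        · exact Filter.Eventually.of_forall (fun n => subset_closure (hmemS n x).2)
      have hwl : w (x, l) = 0 := by
        apply hwfr
        rw [frontier_strip hl]
        exact ⟨mem_univ _, by simp⟩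
      have hwnl : w (x, -l) = 0 := by
        apply hwfr
        rw [frontier_strip hl]
        exact ⟨mem_univ _, by simp⟩
      rw [hwl] at htop; rw [hwnl] at hbot
      simpa using (htop.abs.add hbot.abs)
  rw [integral_zero] at hdct
  obtain ⟨n, hn⟩ := (hdct.eventually (eventually_lt_nhds hε)).exists
  exact ⟨bs n, (hmem n).1, (hmem n).2, hn⟩


open MeasureTheory in
lemma abs_setIntegral_le_abs (f : ℝ → ℝ) (s : Set ℝ) :
    |∫ x in s, f x| ≤ ∫ x in s, |f x| := by
  simpa [Real.norm_eq_abs] using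
    norm_integral_le_integral_norm (μ := MeasureTheory.Measure.restrict volume s) f


open MeasureTheory Set in
set_option maxHeartbeats 1600000 in
lemma X_vanish {l M : ℝ} (hl : 0 < l) {u v : ℝ × ℝ → ℝ}
    (hu : ContDiffOn ℝ 2 u ((univ : Set ℝ) ×ˢ Ioo (-l) l))
    (hv : ContDiffOn ℝ 2 v ((univ : Set ℝ) ×ˢ Ioo (-l) l))
    (hwcont : ContinuousOn (fun q => v q - u q) (closure ((univ : Set ℝ) ×ˢ Ioo (-l) l)))
    (hwfr : ∀ p ∈ frontier ((univ : Set ℝ) ×ˢ Ioo (-l) l), v p = u p)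
    (hcmc : ∀ p ∈ (univ : Set ℝ) ×ˢ Ioo (-l) l, cmcOp u p = cmcOp v p)
    (hM : ∀ p ∈ (univ : Set ℝ) ×ˢ Ioo (-l) l, |v p - u p| ≤ M) :
    ∀ p ∈ (univ : Set ℝ) ×ˢ Ioo (-l) l, Xone u v p = 0 ∧ Xtwo u v p = 0 := by
  set S := (univ : Set ℝ) ×ˢ Ioo (-l) l with hS
  have hSo : IsOpen S := isOpen_univ.prod isOpen_Ioo
  by_contra hcon
  push_neg at hcon
  obtain ⟨p₀, hp₀S, hp₀⟩ := hcon
  -- positivity of dd at p₀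
  have hpos : 0 < dd u v p₀ := by
    have hle := sq_le_dd u v p₀
    rcases eq_or_ne (Xone u v p₀) 0 with h1 | h1
    · have h2 : Xtwo u v p₀ ≠ 0 := hp₀ h1
      nlinarith [sq_nonneg (Xone u v p₀), (sq_pos_of_ne_zero h2 : 0 < Xtwo u v p₀ ^ 2)]
    · nlinarith [sq_nonneg (Xtwo u v p₀), (sq_pos_of_ne_zero h1 : 0 < Xone u v p₀ ^ 2)]
  set M' : ℝ := max M 1 with hM'
  have hM'1 : 1 ≤ M' := le_max_right _ _
  have hM'0 : 0 < M' := lt_of_lt_of_le one_pos hM'1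
  have hwM' : ∀ p ∈ S, |v p - u p| ≤ M' := fun p hp => le_trans (hM p hp) (le_max_left _ _)
  -- notation
  set R : ℝ → ℝ → Set (ℝ × ℝ) := fun a b => Icc ((-a, -b) : ℝ × ℝ) ((a, b) : ℝ × ℝ) with hR
  set II : ℝ → ℝ → ℝ := fun a b => ∫ p in R a b, dd u v p with hII
  -- basic integrability
  have hIa : ∀ a b : ℝ, 0 < b → b < l → IntegrableOn (dd u v) (R a b) := by
    intro a b hb hbl
    exact ((dd_continuousOn hu hv).mono (rect_subset hb hbl)).integrableOn_compact isCompact_Icc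
  have hImono_a : ∀ a a' b : ℝ, 0 < b → b < l → a ≤ a' → II a b ≤ II a' b := by
    intro a a' b hb hbl haa'
    have hsub : R a b ⊆ R a' b := by
      apply Icc_subset_Icc
      · exact ⟨by dsimp; linarith, le_rfl⟩
      · exact ⟨haa', le_rfl⟩
    exact setIntegral_mono_set (hIa a' b hb hbl) (Filter.Eventually.of_forall (dd_nonneg u v))
      (HasSubset.Subset.eventuallyLE hsub)
  have hImono_b : ∀ a b b' : ℝ, 0 < b → b ≤ b' → b' < l → II a b ≤ II a b' := by
    intro a b b' hb hbb' hb'l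
    have hsub : R a b ⊆ R a b' := by
      apply Icc_subset_Icc
      · exact ⟨le_rfl, by dsimp; linarith⟩
      · exact ⟨le_rfl, hbb'⟩
    exact setIntegral_mono_set (hIa a b' (lt_of_lt_of_le hb hbb') hb'l)
      (Filter.Eventually.of_forall (dd_nonneg u v)) (HasSubset.Subset.eventuallyLE hsub)
  -- Step A : positivity
  obtain ⟨a₁, b₁, δ, ha₁, hb₁, hb₁l, hδ, hA1⟩ :
      ∃ a₁ b₁ δ : ℝ, 0 < a₁ ∧ 0 < b₁ ∧ b₁ < l ∧ 0 < δ ∧ δ ≤ II a₁ b₁ := by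
    have hcontAt : ContinuousAt (dd u v) p₀ :=
      (dd_continuousOn hu hv).continuousAt (hSo.mem_nhds hp₀S)
    have hev : ∀ᶠ q in nhds p₀, dd u v p₀ / 2 < dd u v q ∧ q ∈ S :=
      (hcontAt.eventually (eventually_gt_nhds (by linarith : dd u v p₀ / 2 < dd u v p₀))).and
        (hSo.eventually_mem hp₀S)
    obtain ⟨r, hr0, hball⟩ := Metric.eventually_nhds_iff_ball.1 hev
    set r' : ℝ := r / 2 with hr'
    have hr'0 : 0 < r' := by positivity
    set x₀ : ℝ := p₀.1 with hx₀
    set y₀ : ℝ := p₀.2 with hy₀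
    set K : Set (ℝ × ℝ) := Icc (x₀ - r') (x₀ + r') ×ˢ Icc (y₀ - r') (y₀ + r') with hK
    have hKball : ∀ q ∈ K, q ∈ Metric.ball p₀ r := by
      intro q hq
      rcases hq with ⟨hq1, hq2⟩
      rw [Set.mem_Icc] at hq1 hq2
      rw [Metric.mem_ball, Prod.dist_eq]
      have h1 : dist q.1 x₀ ≤ r' := by
        rw [Real.dist_eq, abs_le]; constructor <;> linarith [hq1.1, hq1.2]
      have h2 : dist q.2 y₀ ≤ r' := by
        rw [Real.dist_eq, abs_le]; constructor <;> linarith [hq2.1, hq2.2]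
      calc max (dist q.1 p₀.1) (dist q.2 p₀.2) ≤ r' := max_le h1 h2
        _ < r := by rw [hr']; linarith
    have hcor1 : ((x₀, y₀ + r') : ℝ × ℝ) ∈ S := by
      refine (hball _ (hKball (x₀, y₀ + r') ?_)).2
      refine ⟨?_, ?_⟩ <;> rw [Set.mem_Icc] <;> constructor <;> dsimp <;> linarith
    have hcor2 : ((x₀, y₀ - r') : ℝ × ℝ) ∈ S := by
      refine (hball _ (hKball (x₀, y₀ - r') ?_)).2
      refine ⟨?_, ?_⟩ <;> rw [Set.mem_Icc] <;> constructor <;> dsimp <;> linarith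
    have hyu : y₀ + r' < l := hcor1.2.2
    have hyl : -l < y₀ - r' := hcor2.2.1
    set b₁ : ℝ := max |y₀ - r'| |y₀ + r'| with hb₁def
    set a₁ : ℝ := |x₀| + r' with ha₁def
    have ha₁0 : 0 < a₁ := by
      have := abs_nonneg x₀; rw [ha₁def]; linarith
    have h2r : 2 * r' ≤ |y₀ - r'| + |y₀ + r'| := by
      have h := abs_add_le (y₀ + r') (-(y₀ - r'))
      rw [abs_neg] at h
      have h2 : |(y₀ + r') + -(y₀ - r')| = 2 * r' := by
        rw [show (y₀ + r') + -(y₀ - r') = 2 * r' by ring, abs_of_pos (by linarith)]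
      linarith
    have hb₁0 : 0 < b₁ := by
      have h1 := le_max_left |y₀ - r'| |y₀ + r'|
      have h2 := le_max_right |y₀ - r'| |y₀ + r'|
      rw [hb₁def] at *
      linarith
    have hb₁l : b₁ < l := by
      apply max_lt
      · rw [abs_lt]; constructor <;> linarith
      · rw [abs_lt]; constructor <;> linarith
    have hKR : K ⊆ R a₁ b₁ := by
      intro q hq
      rcases hq with ⟨hq1, hq2⟩
      rw [Set.mem_Icc] at hq1 hq2
      have h1 := le_max_left |y₀ - r'| |y₀ + r'|
      have h2 := le_max_right |y₀ - r'| |y₀ + r'|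
      have h3 := le_abs_self x₀
      have h4 := neg_abs_le x₀
      have h5 := le_abs_self (y₀ + r')
      have h6 := neg_abs_le (y₀ - r')
      rw [hR]
      refine ⟨⟨?_, ?_⟩, ⟨?_, ?_⟩⟩ <;> dsimp <;> linarith [hq1.1, hq1.2, hq2.1, hq2.2]
    have hvolK : volume K = ENNReal.ofReal (2 * r') * ENNReal.ofReal (2 * r') := by
      rw [hK, Measure.volume_eq_prod, Measure.prod_prod, Real.volume_Icc, Real.volume_Icc,
        show (x₀ + r') - (x₀ - r') = 2 * r' by ring,
        show (y₀ + r') - (y₀ - r') = 2 * r' by ring]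
    have hKint : IntegrableOn (dd u v) K := (hIa a₁ b₁ hb₁0 hb₁l).mono_set hKR
    have hconst := setIntegral_ge_of_const_le (c := dd u v p₀ / 2)
      (measurableSet_Icc.prod measurableSet_Icc)
      (by rw [← hK, hvolK]; exact ENNReal.mul_ne_top ENNReal.ofReal_ne_top ENNReal.ofReal_ne_top)
      (fun q hq => le_of_lt (hball q (hKball q hq)).1) hKint
    have hvolKr : (volume K).toReal = (2 * r') * (2 * r') := by
      rw [hvolK, ENNReal.toReal_mul, ENNReal.toReal_ofReal (by linarith : (0:ℝ) ≤ 2*r')]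
    refine ⟨a₁, b₁, dd u v p₀ / 2 * ((2 * r') * (2 * r')), ha₁0, hb₁0, hb₁l, by positivity, ?_⟩
    calc dd u v p₀ / 2 * ((2 * r') * (2 * r'))
        = dd u v p₀ / 2 * (volume K).toReal := by rw [hvolKr]
      _ ≤ ∫ p in K, dd u v p := by
          have h := hconst; rw [smul_eq_mul, Measure.real_def, mul_comm] at h; exact h
      _ ≤ II a₁ b₁ := setIntegral_mono_set (hIa a₁ b₁ hb₁0 hb₁l)
          (Filter.Eventually.of_forall (dd_nonneg u v)) (HasSubset.Subset.eventuallyLE hKR)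
  -- constants
  set η : ℝ := δ / (2 * M') with hη
  have hη0 : 0 < η := by positivity
  set κ : ℝ := η ^ 2 / (4 * l) with hκ
  have hκ0 : 0 < κ := by positivity
  set A : ℝ := a₁ + (8 * M' * l + δ) / κ with hA
  have ha₁A : a₁ ≤ A := by
    rw [hA]; nlinarith [div_nonneg (by nlinarith : (0:ℝ) ≤ 8 * M' * l + δ) hκ0.le]
  have hA0 : 0 < A := lt_of_lt_of_le ha₁ ha₁A
  -- Step B : choose b
  obtain ⟨b, hb₁b, hbl, hQ⟩ := horiz_small (M := M') (A := A) (b₀ := b₁) hl hwcont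
    (fun p hp => by rw [hwfr p hp]; ring) hwM' (by positivity : 0 < δ/4) hb₁ hb₁l
  have hb0 : 0 < b := lt_trans hb₁ hb₁b
  set Qb : ℝ := ∫ x in Icc (-A) A, (|v (x, b) - u (x, b)| + |v (x, -b) - u (x, -b)|) with hQb
  have hQb4 : Qb < δ / 4 := hQ
  have hQbnn : 0 ≤ Qb := by
    rw [hQb]
    apply setIntegral_nonneg measurableSet_Icc
    intro x _
    positivity
  -- slice helpers
  have hmemS_y : ∀ y : ℝ, -l < y → y < l → ∀ x : ℝ, ((x, y) : ℝ × ℝ) ∈ S :=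
    fun y h1 h2 x => ⟨mem_univ _, h1, h2⟩
  have hwSc : ContinuousOn (fun q => v q - u q) S := hwcont.mono subset_closure
  have hXoneS : ContinuousOn (Xone u v) S := Xone_continuousOn hu hv
  have hXtwoS : ContinuousOn (Xtwo u v) S := Xtwo_continuousOn hu hv
  have hsliceY : ∀ (F : ℝ × ℝ → ℝ), ContinuousOn F S → ∀ t : ℝ,
      ContinuousOn (fun y => F (t, y)) (Icc (-b) b) := by
    intro F hF t
    apply hF.comp (continuous_const.prodMk continuous_id).continuousOn
    intro y hy
    exact hmemS_y y (by linarith [hy.1]) (by linarith [hy.2]) t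
  have hsliceX : ∀ (F : ℝ × ℝ → ℝ), ContinuousOn F S → ∀ y : ℝ, -l < y → y < l →
      Continuous (fun x => F (x, y)) := by
    intro F hF y h1 h2
    exact hF.comp_continuous (continuous_id.prodMk continuous_const)
      (fun x => hmemS_y y h1 h2 x)
  -- slice integrals
  set hplus : ℝ → ℝ := fun t => ∫ y in Icc (-b) b, |Xone u v (t, y)| with hhplus
  set hminus : ℝ → ℝ := fun t => ∫ y in Icc (-b) b, |Xone u v (-t, y)| with hhminus
  set Splus : ℝ → ℝ := fun t => ∫ y in Icc (-b) b, (Xone u v (t, y)) ^ 2 with hSplus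
  set Sminus : ℝ → ℝ := fun t => ∫ y in Icc (-b) b, (Xone u v (-t, y)) ^ 2 with hSminus
  -- lower bound for II a₁ b
  have hIlow : δ ≤ II a₁ b := le_trans hA1 (hImono_b a₁ b₁ b hb₁ (le_of_lt hb₁b) hbl)
  -- Green decomposition bounds
  have hhoriz : ∀ t : ℝ, 0 < t → t ≤ A →
      |(∫ x in (-t)..t, (v (x, b) - u (x, b)) * Xtwo u v (x, b))
        - ∫ x in (-t)..t, (v (x, -b) - u (x, -b)) * Xtwo u v (x, -b)| ≤ 2 * Qb := by
    intro t ht htA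
    have key : ∀ y : ℝ, -l < y → y < l →
        |∫ x in (-t)..t, (v (x, y) - u (x, y)) * Xtwo u v (x, y)|
          ≤ 2 * ∫ x in Icc (-A) A, |v (x, y) - u (x, y)| := by
      intro y hy1 hy2
      have hcw : Continuous fun x : ℝ => v (x, y) - u (x, y) := hsliceX _ hwSc y hy1 hy2
      have hcX : Continuous fun x : ℝ => Xtwo u v (x, y) := hsliceX _ hXtwoS y hy1 hy2
      rw [intervalIntegral.integral_of_le (by linarith : -t ≤ t)]
      calc |∫ x in Ioc (-t) t, (v (x, y) - u (x, y)) * Xtwo u v (x, y)|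
          ≤ ∫ x in Ioc (-t) t, |(v (x, y) - u (x, y)) * Xtwo u v (x, y)| :=
            abs_setIntegral_le_abs _ _
        _ ≤ ∫ x in Ioc (-t) t, 2 * |v (x, y) - u (x, y)| := by
            apply setIntegral_mono_on
            · exact ((hcw.mul hcX).abs.integrableOn_Ioc)
            · exact ((continuous_const.mul hcw.abs).integrableOn_Ioc)
            · exact measurableSet_Ioc
            · intro x _
              rw [abs_mul]
              have h1 := abs_Xtwo_le_two u v (x, y)
              have h2 := abs_nonneg (v (x, y) - u (x, y))
              nlinarith
        _ ≤ ∫ x in Icc (-A) A, 2 * |v (x, y) - u (x, y)| := by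
            apply setIntegral_mono_set ((continuous_const.mul hcw.abs).integrableOn_Icc)
              (Filter.Eventually.of_forall (fun x => by show (0:ℝ) ≤ 2 * |v (x, y) - u (x, y)|; positivity))
            apply HasSubset.Subset.eventuallyLE
            exact subset_trans Ioc_subset_Icc_self (Icc_subset_Icc (by linarith) htA)
        _ = 2 * ∫ x in Icc (-A) A, |v (x, y) - u (x, y)| := integral_const_mul 2 _
    have h1 := key b (by linarith) hbl
    have h2 := key (-b) (by linarith) (by linarith)
    have hsum : Qb = (∫ x in Icc (-A) A, |v (x, b) - u (x, b)|)
        + ∫ x in Icc (-A) A, |v (x, -b) - u (x, -b)| := by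
      rw [hQb]
      exact integral_add ((hsliceX _ hwSc b (by linarith) hbl).abs.integrableOn_Icc)
        ((hsliceX _ hwSc (-b) (by linarith) (by linarith)).abs.integrableOn_Icc)
    calc |(∫ x in (-t)..t, (v (x, b) - u (x, b)) * Xtwo u v (x, b))
        - ∫ x in (-t)..t, (v (x, -b) - u (x, -b)) * Xtwo u v (x, -b)|
        ≤ |∫ x in (-t)..t, (v (x, b) - u (x, b)) * Xtwo u v (x, b)|
          + |∫ x in (-t)..t, (v (x, -b) - u (x, -b)) * Xtwo u v (x, -b)| := abs_sub _ _
      _ ≤ 2 * Qb := by rw [hsum]; linarith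
  have hvert : ∀ t : ℝ, 0 < t →
      |(∫ y in (-b)..b, (v (t, y) - u (t, y)) * Xone u v (t, y))
        - ∫ y in (-b)..b, (v (-t, y) - u (-t, y)) * Xone u v (-t, y)|
        ≤ M' * (hplus t + hminus t) := by
    intro t ht
    have key : ∀ s : ℝ,
        |∫ y in (-b)..b, (v (s, y) - u (s, y)) * Xone u v (s, y)|
          ≤ M' * ∫ y in Icc (-b) b, |Xone u v (s, y)| := by
      intro s
      have hc1 : ContinuousOn (fun y => (v (s, y) - u (s, y)) * Xone u v (s, y)) (Icc (-b) b) :=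
        (hsliceY _ hwSc s).mul (hsliceY _ hXoneS s)
      rw [intervalIntegral.integral_of_le (by linarith : -b ≤ b)]
      calc |∫ y in Ioc (-b) b, (v (s, y) - u (s, y)) * Xone u v (s, y)|
          ≤ ∫ y in Ioc (-b) b, |(v (s, y) - u (s, y)) * Xone u v (s, y)| :=
            abs_setIntegral_le_abs _ _
        _ ≤ ∫ y in Ioc (-b) b, M' * |Xone u v (s, y)| := by
            apply setIntegral_mono_on
            · exact (hc1.abs.integrableOn_compact isCompact_Icc).mono_set Ioc_subset_Icc_self
            · exact (((continuousOn_const.mul (hsliceY _ hXoneS s).abs).integrableOn_compact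
                isCompact_Icc).mono_set Ioc_subset_Icc_self)
            · exact measurableSet_Ioc
            · intro y hy
              rw [abs_mul]
              have hmem : ((s, y) : ℝ × ℝ) ∈ S :=
                hmemS_y y (by linarith [hy.1]) (by linarith [hy.2]) s
              have h1 := hwM' _ hmem
              have h2 := abs_nonneg (Xone u v (s, y))
              nlinarith
        _ = ∫ y in Icc (-b) b, M' * |Xone u v (s, y)| :=
            setIntegral_congr_set Ioc_ae_eq_Icc
        _ = M' * ∫ y in Icc (-b) b, |Xone u v (s, y)| := integral_const_mul M' _
    have h1 := key t
    have h2 := key (-t)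
    calc |(∫ y in (-b)..b, (v (t, y) - u (t, y)) * Xone u v (t, y))
        - ∫ y in (-b)..b, (v (-t, y) - u (-t, y)) * Xone u v (-t, y)|
        ≤ |∫ y in (-b)..b, (v (t, y) - u (t, y)) * Xone u v (t, y)|
          + |∫ y in (-b)..b, (v (-t, y) - u (-t, y)) * Xone u v (-t, y)| := abs_sub _ _
      _ ≤ M' * (hplus t + hminus t) := by rw [hhplus, hhminus]; dsimp; linarith
  have hvert8 : ∀ t : ℝ, 0 < t →
      |(∫ y in (-b)..b, (v (t, y) - u (t, y)) * Xone u v (t, y))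
        - ∫ y in (-b)..b, (v (-t, y) - u (-t, y)) * Xone u v (-t, y)| ≤ 8 * M' * l := by
    intro t ht
    have key : ∀ s : ℝ,
        |∫ y in (-b)..b, (v (s, y) - u (s, y)) * Xone u v (s, y)| ≤ 4 * M' * l := by
      intro s
      have hbd : ∀ y ∈ Set.uIoc (-b) b, ‖(v (s, y) - u (s, y)) * Xone u v (s, y)‖ ≤ 2 * M' := by
        intro y hy
        rw [Set.uIoc_of_le (by linarith : -b ≤ b)] at hy
        have hmem : ((s, y) : ℝ × ℝ) ∈ S :=
          hmemS_y y (by linarith [hy.1]) (by linarith [hy.2]) s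
        rw [Real.norm_eq_abs, abs_mul]
        have h1 := hwM' _ hmem
        have h2 := abs_Xone_le_two u v (s, y)
        have h3 := abs_nonneg (v (s, y) - u (s, y))
        have h4 := abs_nonneg (Xone u v (s, y))
        nlinarith
      have h := intervalIntegral.norm_integral_le_of_norm_le_const hbd
      rw [Real.norm_eq_abs] at h
      have hb2 : |b - (-b)| = 2 * b := by rw [abs_of_pos (by linarith)]; ring
      rw [hb2] at h
      calc |∫ y in (-b)..b, (v (s, y) - u (s, y)) * Xone u v (s, y)| ≤ 2 * M' * (2 * b) := h
        _ ≤ 4 * M' * l := by nlinarith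
    have h1 := key t
    have h2 := key (-t)
    calc |(∫ y in (-b)..b, (v (t, y) - u (t, y)) * Xone u v (t, y))
        - ∫ y in (-b)..b, (v (-t, y) - u (-t, y)) * Xone u v (-t, y)|
        ≤ |∫ y in (-b)..b, (v (t, y) - u (t, y)) * Xone u v (t, y)|
          + |∫ y in (-b)..b, (v (-t, y) - u (-t, y)) * Xone u v (-t, y)| := abs_sub _ _
      _ ≤ 8 * M' * l := by linarith
  have hgreen : ∀ t : ℝ, 0 < t → II t b =
      (((∫ x in (-t)..t, (v (x, b) - u (x, b)) * Xtwo u v (x, b))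
        - ∫ x in (-t)..t, (v (x, -b) - u (x, -b)) * Xtwo u v (x, -b))
        + ∫ y in (-b)..b, (v (t, y) - u (t, y)) * Xone u v (t, y))
        - ∫ y in (-b)..b, (v (-t, y) - u (-t, y)) * Xone u v (-t, y) := by
    intro t ht
    exact green_identity hu hv hcmc ht hb0 hbl
  -- upper bound for II
  have hIub : ∀ t : ℝ, 0 < t → t ≤ A → II t b ≤ 8 * M' * l + 2 * Qb := by
    intro t ht htA
    have h1 := hgreen t ht
    have h2 := hhoriz t ht htA
    have h3 := hvert8 t ht
    rw [h1]
    have := abs_le.1 h2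
    have := abs_le.1 h3
    rcases abs_le.1 h2 with ⟨h2a, h2b⟩
    rcases abs_le.1 h3 with ⟨h3a, h3b⟩
    linarith
  -- flux lower bound
  have hflux : ∀ t : ℝ, a₁ ≤ t → t ≤ A → η ≤ hplus t + hminus t := by
    intro t ht htA
    have ht0 : 0 < t := lt_of_lt_of_le ha₁ ht
    have h1 : δ ≤ II t b := le_trans hIlow (hImono_a a₁ t b hb0 hbl ht)
    have h2 := hgreen t ht0
    have h3 := hhoriz t ht0 htA
    have h4 := hvert t ht0
    rcases abs_le.1 h3 with ⟨h3a, _⟩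
    rcases abs_le.1 h4 with ⟨_, h4b⟩
    have h5 : δ ≤ 2 * Qb + M' * (hplus t + hminus t) := by
      rw [h2] at h1; linarith
    rw [hη]
    rw [div_le_iff₀ (by positivity)]
    nlinarith
  -- Cauchy-Schwarz per slice
  have hCS : ∀ t : ℝ, a₁ ≤ t → t ≤ A → κ ≤ Splus t + Sminus t := by
    intro t hta htA
    have hflux' := hflux t hta htA
    have hcs : ∀ s : ℝ, (∫ y in Icc (-b) b, |Xone u v (s, y)|) ^ 2
        ≤ (2 * b) * ∫ y in Icc (-b) b, (Xone u v (s, y)) ^ 2 := by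
      intro s
      have hm1 : AEStronglyMeasurable (fun y => Xone u v (s, y))
          (volume.restrict (Icc (-b) b)) :=
        (hsliceY _ hXoneS s).aestronglyMeasurable measurableSet_Icc
      have hi1 : IntegrableOn (fun y => (Xone u v (s, y)) ^ 2) (Icc (-b) b) :=
        ((hsliceY _ hXoneS s).pow 2).integrableOn_compact isCompact_Icc
      have h := sq_setIntegral_le_mul_integral_sq (by linarith : -b ≤ b) hm1 hi1
      rw [show b - (-b) = 2 * b by ring] at h
      exact h
    have hcs1 := hcs t
    have hcs2 := hcs (-t)
    have hSp0 : 0 ≤ Splus t := setIntegral_nonneg measurableSet_Icc (fun y _ => sq_nonneg _)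
    have hSm0 : 0 ≤ Sminus t := setIntegral_nonneg measurableSet_Icc (fun y _ => sq_nonneg _)
    have hp0 : 0 ≤ hplus t := setIntegral_nonneg measurableSet_Icc (fun y _ => abs_nonneg _)
    have hm0 : 0 ≤ hminus t := setIntegral_nonneg measurableSet_Icc (fun y _ => abs_nonneg _)
    have hη2 : η ^ 2 ≤ (hplus t + hminus t) ^ 2 := by nlinarith
    have hcs1' : (hplus t) ^ 2 ≤ (2 * b) * Splus t := hcs1
    have hcs2' : (hminus t) ^ 2 ≤ (2 * b) * Sminus t := hcs2
    rw [hκ, div_le_iff₀ (by positivity : (0:ℝ) < 4 * l)]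
    have hmono : (2 * b) * (Splus t + Sminus t) ≤ (2 * l) * (Splus t + Sminus t) :=
      mul_le_mul_of_nonneg_right (by linarith) (by linarith)
    nlinarith [sq_nonneg (hplus t - hminus t)]
  -- slab estimate
  have hslab : κ * (A - a₁) ≤ II A b - II a₁ b := by
    have hsubR : R a₁ b ⊆ R A b :=
      Icc_subset_Icc ⟨by dsimp; linarith, le_rfl⟩ ⟨ha₁A, le_rfl⟩
    have hIAb := hIa A b hb0 hbl
    have hdiffeq : ∫ p in R A b \ R a₁ b, dd u v p = II A b - II a₁ b :=
      integral_diff measurableSet_Icc hIAb hsubR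
    set Pp : Set (ℝ × ℝ) := Ioc a₁ A ×ˢ Icc (-b) b with hPp
    set Pm : Set (ℝ × ℝ) := Ico (-A) (-a₁) ×ˢ Icc (-b) b with hPm
    have hPpR : Pp ⊆ R A b := by
      rintro q ⟨hq1, hq2⟩
      rw [hR]
      have h1 : a₁ < q.1 := hq1.1
      exact ⟨⟨by show -A ≤ q.1; linarith, hq2.1⟩, ⟨hq1.2, hq2.2⟩⟩
    have hPmR : Pm ⊆ R A b := by
      rintro q ⟨hq1, hq2⟩
      rw [hR]
      have h1 : q.1 < -a₁ := hq1.2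
      exact ⟨⟨hq1.1, hq2.1⟩, ⟨by show q.1 ≤ A; linarith, hq2.2⟩⟩
    have hPsub : Pp ∪ Pm ⊆ R A b \ R a₁ b := by
      intro q hq
      rcases hq with hq | hq
      · refine ⟨hPpR hq, fun hmem => ?_⟩
        rw [hR, Set.mem_Icc] at hmem
        have h1 : q.1 ≤ a₁ := hmem.2.1
        have h2 : a₁ < q.1 := hq.1.1
        linarith
      · refine ⟨hPmR hq, fun hmem => ?_⟩
        rw [hR, Set.mem_Icc] at hmem
        have h1 : -a₁ ≤ q.1 := hmem.1.1
        have h2 : q.1 < -a₁ := hq.1.2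
        linarith
    have hX2cont : ContinuousOn (fun p => (Xone u v p) ^ 2) S := hXoneS.pow 2
    have hX2int : IntegrableOn (fun p => (Xone u v p) ^ 2) (R A b) :=
      ((hX2cont.mono (rect_subset hb0 hbl)).integrableOn_compact isCompact_Icc)
    have hPuR : Pp ∪ Pm ⊆ R A b := union_subset hPpR hPmR
    have hmPp : MeasurableSet Pp := measurableSet_Ioc.prod measurableSet_Icc
    have hmPm : MeasurableSet Pm := measurableSet_Ico.prod measurableSet_Icc
    have h2 : ∫ p in Pp ∪ Pm, (Xone u v p) ^ 2 ≤ ∫ p in Pp ∪ Pm, dd u v p := by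
      apply setIntegral_mono_on (hX2int.mono_set hPuR) ((hIa A b hb0 hbl).mono_set hPuR)
        (hmPp.union hmPm)
      intro p _
      have := sq_le_dd u v p
      nlinarith [sq_nonneg (Xtwo u v p)]
    have h3 : ∫ p in Pp ∪ Pm, dd u v p ≤ ∫ p in R A b \ R a₁ b, dd u v p :=
      setIntegral_mono_set (hIAb.mono_set diff_subset)
        (Filter.Eventually.of_forall (dd_nonneg u v))
        (HasSubset.Subset.eventuallyLE hPsub)
    have hdisj : Disjoint Pp Pm := by
      rw [Set.disjoint_left]
      rintro q ⟨hq1, _⟩ ⟨hq2, _⟩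
      have h1 : a₁ < q.1 := hq1.1
      have h2 : q.1 < -a₁ := hq2.2
      linarith
    have hunion : ∫ p in Pp ∪ Pm, (Xone u v p) ^ 2
        = (∫ p in Pp, (Xone u v p) ^ 2) + ∫ p in Pm, (Xone u v p) ^ 2 :=
      setIntegral_union hdisj hmPm (hX2int.mono_set hPpR) (hX2int.mono_set hPmR)
    -- Fubini
    have hFp : ∫ p in Pp, (Xone u v p) ^ 2
        = ∫ x in Ioc a₁ A, ∫ y in Icc (-b) b, (Xone u v (x, y)) ^ 2 :=
      setIntegral_prod _ (hX2int.mono_set hPpR)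
    have hFm : ∫ p in Pm, (Xone u v p) ^ 2
        = ∫ x in Ico (-A) (-a₁), ∫ y in Icc (-b) b, (Xone u v (x, y)) ^ 2 :=
      setIntegral_prod _ (hX2int.mono_set hPmR)
    -- integrability of slice functions
    have hSplus_int : IntegrableOn Splus (Ioc a₁ A) := by
      have hf := hX2int.mono_set hPpR
      rw [hPp, IntegrableOn, Measure.volume_eq_prod, ← Measure.prod_restrict] at hf
      exact hf.integral_prod_left
    have hSx_int : IntegrableOn (fun x => ∫ y in Icc (-b) b, (Xone u v (x, y)) ^ 2)
        (Ico (-A) (-a₁)) := by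
      have hf := hX2int.mono_set hPmR
      rw [hPm, IntegrableOn, Measure.volume_eq_prod, ← Measure.prod_restrict] at hf
      exact hf.integral_prod_left
    have hSplus_ii : IntervalIntegrable Splus volume a₁ A :=
      (intervalIntegrable_iff_integrableOn_Ioc_of_le ha₁A).2 hSplus_int
    have hSminus_ii : IntervalIntegrable Sminus volume a₁ A := by
      have h1 : IntegrableOn (fun x => ∫ y in Icc (-b) b, (Xone u v (x, y)) ^ 2)
          (Ioc (-A) (-a₁)) := hSx_int.mono_set_ae (Filter.EventuallyEq.le Ico_ae_eq_Ioc.symm)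
      have h2 : IntervalIntegrable (fun x => ∫ y in Icc (-b) b, (Xone u v (x, y)) ^ 2)
          volume (-A) (-a₁) :=
        (intervalIntegrable_iff_integrableOn_Ioc_of_le (by linarith)).2 h1
      have h3 := ((IntervalIntegrable.iff_comp_neg (by simp)).1 h2)
      simp only [neg_neg] at h3
      exact h3.symm
    -- convert to interval integrals
    have hFm' : ∫ x in Ico (-A) (-a₁), ∫ y in Icc (-b) b, (Xone u v (x, y)) ^ 2
        = ∫ t in a₁..A, Sminus t := by
      rw [setIntegral_congr_set Ico_ae_eq_Ioc,
        ← intervalIntegral.integral_of_le (by linarith : -A ≤ -a₁),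
        ← intervalIntegral.integral_comp_neg (fun x => ∫ y in Icc (-b) b, (Xone u v (x, y)) ^ 2)]
    have hFp' : ∫ x in Ioc a₁ A, ∫ y in Icc (-b) b, (Xone u v (x, y)) ^ 2
        = ∫ t in a₁..A, Splus t := (intervalIntegral.integral_of_le ha₁A).symm
    have hadd : (∫ t in a₁..A, Splus t) + (∫ t in a₁..A, Sminus t)
        = ∫ t in a₁..A, (Splus t + Sminus t) :=
      (intervalIntegral.integral_add hSplus_ii hSminus_ii).symm
    have hlow : κ * (A - a₁) ≤ ∫ t in a₁..A, (Splus t + Sminus t) := by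
      have h := intervalIntegral.integral_mono_on ha₁A intervalIntegrable_const
        (hSplus_ii.add hSminus_ii) (fun t ht => hCS t ht.1 ht.2)
      rw [intervalIntegral.integral_const, smul_eq_mul] at h
      linarith [h]
    calc κ * (A - a₁) ≤ ∫ t in a₁..A, (Splus t + Sminus t) := hlow
      _ = (∫ p in Pp, (Xone u v p) ^ 2) + ∫ p in Pm, (Xone u v p) ^ 2 := by
          rw [hFp, hFm, hFp', hFm', hadd]
      _ = ∫ p in Pp ∪ Pm, (Xone u v p) ^ 2 := hunion.symm
      _ ≤ ∫ p in Pp ∪ Pm, dd u v p := h2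
      _ ≤ ∫ p in R A b \ R a₁ b, dd u v p := h3
      _ = II A b - II a₁ b := hdiffeq
  -- final contradiction
  have hub := hIub A hA0 le_rfl
  have hAa : A - a₁ = (8 * M' * l + δ) / κ := by rw [hA]; ring
  have : κ * (A - a₁) = 8 * M' * l + δ := by
    rw [hAa, mul_div_cancel₀ _ (ne_of_gt hκ0)]
  nlinarith [hIlow, hImono_a a₁ A b hb0 hbl ha₁A]


/-- Collin–Krust type uniqueness: two CMC solutions on a strip with the same
boundary values and bounded difference coincide. -/
theorem cmc_strip_bounded_difference_uniqueness (H l : ℝ) (hH : 0 < H)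
    (hl : 0 < l) (hl' : 2 * l ≤ 1 / H)
    (u v : ℝ × ℝ → ℝ)
    (hu : ContDiffOn ℝ 2 u ((Set.univ : Set ℝ) ×ˢ Set.Ioo (-l) l))
    (hv : ContDiffOn ℝ 2 v ((Set.univ : Set ℝ) ×ˢ Set.Ioo (-l) l))
    (hucont : ContinuousOn u (closure ((Set.univ : Set ℝ) ×ˢ Set.Ioo (-l) l)))
    (hvcont : ContinuousOn v (closure ((Set.univ : Set ℝ) ×ˢ Set.Ioo (-l) l)))
    (hucmc : ∀ p ∈ (Set.univ : Set ℝ) ×ˢ Set.Ioo (-l) l, cmcOp u p = 2 * H)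
    (hvcmc : ∀ p ∈ (Set.univ : Set ℝ) ×ˢ Set.Ioo (-l) l, cmcOp v p = 2 * H)
    (hbdry : Set.EqOn u v (frontier ((Set.univ : Set ℝ) ×ˢ Set.Ioo (-l) l)))
    (hbnd : ∃ M : ℝ, ∀ p ∈ (Set.univ : Set ℝ) ×ˢ Set.Ioo (-l) l, |v p - u p| ≤ M) :
    Set.EqOn u v ((Set.univ : Set ℝ) ×ˢ Set.Ioo (-l) l) := by
  intro p hp
  set S := (Set.univ : Set ℝ) ×ˢ Set.Ioo (-l) l with hS
  have hSo : IsOpen S := isOpen_univ.prod isOpen_Ioo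
  obtain ⟨M, hM⟩ := hbnd
  have hvanish := X_vanish hl hu hv (hvcont.sub hucont)
    (fun q hq => by rw [hbdry hq]) (fun q hq => by rw [hucmc q hq, hvcmc q hq]) hM
  -- gradients agree
  have hgrad : ∀ q ∈ S, pdx u q = pdx v q ∧ pdy u q = pdy v q := by
    intro q hq
    obtain ⟨h1, h2⟩ := hvanish q hq
    rw [Xone, sub_eq_zero] at h1
    rw [Xtwo, sub_eq_zero] at h2
    rw [N1, N1, div_eq_div_iff (Wf_pos v q).ne' (Wf_pos u q).ne'] at h1
    rw [N2, N2, div_eq_div_iff (Wf_pos v q).ne' (Wf_pos u q).ne'] at h2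
    obtain ⟨e1, e2⟩ := nvec_inj (pdx v q) (pdy v q) (pdx u q) (pdy u q) (Wf v q) (Wf u q)
      (one_le_Wf v q) (one_le_Wf u q) (Wf_sq v q) (Wf_sq u q) h1 h2
    exact ⟨e1.symm, e2.symm⟩
  -- w has zero derivative on S
  have hwdiff : DifferentiableOn ℝ (fun q => v q - u q) S :=
    (hv.differentiableOn (by norm_num)).sub (hu.differentiableOn (by norm_num))
  have hfd0 : ∀ q ∈ S, fderivWithin ℝ (fun q => v q - u q) S q = 0 := by
    intro q hq
    have hdu : DifferentiableAt ℝ u q :=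
      (hu.contDiffAt (hSo.mem_nhds hq)).differentiableAt (by norm_num)
    have hdv : DifferentiableAt ℝ v q :=
      (hv.contDiffAt (hSo.mem_nhds hq)).differentiableAt (by norm_num)
    have hx : fderiv ℝ (fun q => v q - u q) q (1, 0) = 0 := by
      have h := pdx_sub hdv hdu
      rw [pdx] at h
      rw [h, (hgrad q hq).1, sub_self]
    have hy : fderiv ℝ (fun q => v q - u q) q (0, 1) = 0 := by
      have h := pdy_sub hdv hdu
      rw [pdy] at h
      rw [h, (hgrad q hq).2, sub_self]
    rw [fderivWithin_of_isOpen hSo hq]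
    apply ContinuousLinearMap.ext
    intro z
    have hz : z = z.1 • ((1:ℝ), (0:ℝ)) + z.2 • ((0:ℝ), (1:ℝ)) := by
      apply Prod.ext <;> simp
    rw [hz, map_add, _root_.map_smul, _root_.map_smul, hx, hy]
    simp
  have hconv : Convex ℝ S := convex_univ.prod (convex_Ioo _ _)
  -- w is constant on S
  have hconst : ∀ q ∈ S, v q - u q = v p - u p := fun q hq =>
    hconv.is_const_of_fderivWithin_eq_zero hwdiff hfd0 hq hp
  -- boundary limit forces the constant to vanish
  set bs : ℕ → ℝ := fun n => l - l / (n + 2) with hbs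
  have hmem : ∀ n : ℕ, 0 < bs n ∧ bs n < l := by
    intro n
    have h2 : (0:ℝ) < (n:ℝ) + 2 := by positivity
    have h3 : 0 < l / ((n:ℝ) + 2) := div_pos hl h2
    constructor
    · have h4 : l / ((n:ℝ) + 2) < l / 1 := div_lt_div_of_pos_left hl one_pos (by linarith)
      rw [div_one] at h4
      simp only [hbs]
      linarith
    · simp only [hbs]; linarith
  have hbs_tendsto : Filter.Tendsto bs Filter.atTop (nhds l) := by
    have h1 : Filter.Tendsto (fun n : ℕ => ((n:ℝ) + 2)) Filter.atTop Filter.atTop :=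
      Filter.tendsto_atTop_add_const_right _ 2 tendsto_natCast_atTop_atTop
    have h2 : Filter.Tendsto (fun n : ℕ => l / ((n:ℝ) + 2)) Filter.atTop (nhds 0) :=
      Filter.Tendsto.div_atTop tendsto_const_nhds h1
    have h3 := Filter.Tendsto.sub
      (tendsto_const_nhds : Filter.Tendsto (fun _ : ℕ => l) Filter.atTop (nhds l)) h2
    simpa using h3
  have hmemS : ∀ n : ℕ, ((p.1, bs n) : ℝ × ℝ) ∈ S := by
    intro n
    obtain ⟨h1, h2⟩ := hmem n
    exact ⟨mem_univ _, by simp; linarith, h2⟩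
  have hmemtop : ((p.1, l) : ℝ × ℝ) ∈ closure S := by
    rw [hS, closure_strip hl]
    exact ⟨mem_univ _, by constructor <;> simp <;> linarith⟩
  have htop : Filter.Tendsto (fun n => v (p.1, bs n) - u (p.1, bs n)) Filter.atTop
      (nhds (v (p.1, l) - u (p.1, l))) := by
    apply ((hvcont.sub hucont) _ hmemtop).tendsto.comp
    apply tendsto_nhdsWithin_of_tendsto_nhds_of_eventually_within
    · exact (Continuous.tendsto (continuous_const.prodMk continuous_id) l).comp hbs_tendsto
    · exact Filter.Eventually.of_forall (fun n => subset_closure (hmemS n))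
  have hfr : ((p.1, l) : ℝ × ℝ) ∈ frontier S := by
    rw [hS, frontier_strip hl]
    exact ⟨mem_univ _, by simp⟩
  have hwl : v (p.1, l) - u (p.1, l) = 0 := by rw [hbdry hfr]; ring
  rw [hwl] at htop
  have hconst' : (fun n => v (p.1, bs n) - u (p.1, bs n)) = fun _ => v p - u p := by
    funext n
    exact hconst _ (hmemS n)
  rw [hconst'] at htop
  have : v p - u p = 0 := tendsto_nhds_unique tendsto_const_nhds htop
  have : u p = v p := by linarith
  exact this
end
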